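/- arXiv:1912.03667 — 5 statements merged into one kernel-verified Lean document; each statement's English description precedes it below -/
import Mathlib

section
/- Define F(u) = (sinh u − u)/(2 sinh²(u/2)) for u > 0. Then F is strictly increasing on (0, ∞). -/
open Real Set

lemma aux_hasDerivAt_g (x : ℝ) :
    HasDerivAt (fun u : ℝ => 2 * Real.sinh (u / 2) ^ 2) (Real.sinh x) x := by
  have h1 : HasDerivAt (fun u : ℝ => u / 2) (1 / 2) x := by
    simpa using (hasDerivAt_id x).div_const 2
  have h2 : HasDerivAt (fun u : ℝ => Real.sinh (u / 2)) (Real.cosh (x / 2) * (1 / 2)) x :=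
    by have := (Real.hasDerivAt_sinh (x / 2)).comp x h1; exact this
  have h3 := ((h2.pow 2).const_mul (2 : ℝ))
  have : Real.sinh x = 2 * ((2 : ℕ) * Real.sinh (x / 2) ^ 1 * (Real.cosh (x / 2) * (1 / 2))) := by
    have := Real.sinh_two_mul (x / 2)
    rw [show 2 * (x / 2) = x by ring] at this
    rw [this]; push_cast; ring
  rw [this]; exact h3

lemma aux1 : ∀ x : ℝ, 0 < x → Real.sinh x < x * Real.cosh x := by
  have hmono : StrictMonoOn (fun x : ℝ => x * Real.cosh x - Real.sinh x) (Set.Ici 0) := by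
    apply strictMonoOn_of_deriv_pos (convex_Ici 0)
    · exact ((continuous_id.mul Real.continuous_cosh).sub Real.continuous_sinh).continuousOn
    · intro x hx
      rw [interior_Ici] at hx
      have hd : HasDerivAt (fun x : ℝ => x * Real.cosh x - Real.sinh x) (x * Real.sinh x) x := by
        have := ((hasDerivAt_id x).mul (Real.hasDerivAt_cosh x)).sub (Real.hasDerivAt_sinh x)
        exact this.congr_deriv (by simp only [id]; ring)
      rw [hd.deriv]
      exact mul_pos hx (Real.sinh_pos_iff.mpr hx)
  intro x hx
  have := hmono (Set.self_mem_Ici) (Set.mem_Ici.mpr hx.le) hx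
  simp at this
  linarith

lemma aux2 : ∀ x : ℝ, 0 < x → 2 * (Real.cosh x - 1) < x * Real.sinh x := by
  have hmono : StrictMonoOn (fun x : ℝ => x * Real.sinh x - 2 * (Real.cosh x - 1)) (Set.Ici 0) := by
    apply strictMonoOn_of_deriv_pos (convex_Ici 0)
    · exact ((continuous_id.mul Real.continuous_sinh).sub
        (continuous_const.mul (Real.continuous_cosh.sub continuous_const))).continuousOn
    · intro x hx
      rw [interior_Ici] at hx
      have hd : HasDerivAt (fun x : ℝ => x * Real.sinh x - 2 * (Real.cosh x - 1))
          (x * Real.cosh x - Real.sinh x) x := by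
        have := ((hasDerivAt_id x).mul (Real.hasDerivAt_sinh x)).sub
          (((Real.hasDerivAt_cosh x).sub_const 1).const_mul (2 : ℝ))
        exact this.congr_deriv (by simp only [id]; ring)
      rw [hd.deriv]
      linarith [aux1 x hx]
  intro x hx
  have := hmono (Set.self_mem_Ici) (Set.mem_Ici.mpr hx.le) hx
  simp at this
  linarith

lemma denom_identity (u : ℝ) : 2 * Real.sinh (u / 2) ^ 2 = Real.cosh u - 1 := by
  have h := Real.cosh_two_mul (u / 2)
  rw [show 2 * (u / 2) = u by ring] at h
  have h2 : Real.cosh (u / 2) ^ 2 = Real.sinh (u / 2) ^ 2 + 1 := Real.cosh_sq (u / 2)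
  nlinarith

noncomputable def F (u : ℝ) : ℝ := (Real.sinh u - u) / (2 * Real.sinh (u / 2) ^ 2)

theorem F_strictMonoOn : StrictMonoOn F (Set.Ioi (0 : ℝ)) := by
  have hg_ne : ∀ x : ℝ, 0 < x → 2 * Real.sinh (x / 2) ^ 2 ≠ 0 := by
    intro x hx
    have : 0 < Real.sinh (x / 2) := Real.sinh_pos_iff.mpr (by linarith)
    positivity
  apply strictMonoOn_of_deriv_pos (convex_Ioi 0)
  · apply ContinuousOn.div
    · exact (Real.continuous_sinh.sub continuous_id).continuousOn
    · exact (continuous_const.mul ((Real.continuous_sinh.comp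
        (continuous_id.div_const 2)).pow 2)).continuousOn
    · intro x hx; exact hg_ne x hx
  · intro x hx
    rw [interior_Ioi] at hx
    have hf : HasDerivAt (fun u : ℝ => Real.sinh u - u) (Real.cosh x - 1) x := by
      exact (Real.hasDerivAt_sinh x).sub (hasDerivAt_id x)
    have hg := aux_hasDerivAt_g x
    have hF : HasDerivAt F
        (((Real.cosh x - 1) * (2 * Real.sinh (x / 2) ^ 2) - (Real.sinh x - x) * Real.sinh x) /
          (2 * Real.sinh (x / 2) ^ 2) ^ 2) x :=
      hf.div hg (hg_ne x hx)
    rw [hF.deriv]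
    apply div_pos
    · rw [denom_identity]
      have hs : Real.sinh x ^ 2 = Real.cosh x ^ 2 - 1 := by
        have := Real.cosh_sq x; nlinarith
      nlinarith [aux2 x hx]
    · have hx' : (0:ℝ) < x := hx
      have : 0 < Real.sinh (x / 2) := Real.sinh_pos_iff.mpr (by linarith)
      positivity
end

section
/- The equation tanh(κπ) = (π/κ)·(κ²−1)(3−κ²)/(κ²+1) has no solution κ in the open interval (1, √3). -/
theorem no_solution_tanh_eq :
    ¬ ∃ κ : ℝ, κ ∈ Set.Ioo 1 (Real.sqrt 3) ∧
      Real.tanh (κ * Real.pi) =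
        (Real.pi / κ) * ((κ ^ 2 - 1) * (3 - κ ^ 2) / (κ ^ 2 + 1)) := by
  rintro ⟨κ, ⟨h1, h2⟩, heq⟩
  have hκ0 : (0:ℝ) < κ := by linarith
  have h3 : κ ^ 2 < 3 := by
    have := (Real.lt_sqrt hκ0.le).mp h2
    linarith
  have hπ : (3.14:ℝ) < Real.pi := by linarith [Real.pi_gt_d6]
  have hπ' : Real.pi < 3.15 := by linarith [Real.pi_lt_d2]
  -- lower bound on exp (κ * π)
  have he1 : (2.7182818283:ℝ) < Real.exp 1 := Real.exp_one_gt_d9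
  have hexp3 : (20:ℝ) < Real.exp 3 := by
    have h6 : Real.exp 3 = Real.exp 1 ^ 3 := by
      rw [← Real.exp_nat_mul]; norm_num
    rw [h6]
    nlinarith [Real.exp_pos 1, he1, sq_nonneg (Real.exp 1 - 2.7182818283), mul_pos (Real.exp_pos 1) (Real.exp_pos 1)]
  have hE : (20:ℝ) < Real.exp (κ * Real.pi) := by
    have h3le : (3:ℝ) ≤ κ * Real.pi := by nlinarith
    calc (20:ℝ) < Real.exp 3 := hexp3
      _ ≤ Real.exp (κ * Real.pi) := Real.exp_le_exp.mpr h3le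
  -- tanh lower bound
  set y := κ * Real.pi with hy
  have hEpos : (0:ℝ) < Real.exp y := Real.exp_pos y
  have htanh : (0.995:ℝ) < Real.tanh y := by
    rw [Real.tanh_eq_sinh_div_cosh, Real.sinh_eq, Real.cosh_eq]
    rw [Real.exp_neg]
    have hinv : Real.exp y * (Real.exp y)⁻¹ = 1 := mul_inv_cancel₀ hEpos.ne'
    rw [lt_div_iff₀ (by positivity)]
    have hEipos : (0:ℝ) < (Real.exp y)⁻¹ := by positivity
    nlinarith [hinv, hE, hEipos, mul_pos hEpos hEpos]
  -- turn equation into polynomial inequality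
  have hden : (0:ℝ) < κ ^ 2 + 1 := by positivity
  have heq' : Real.tanh y * (κ * (κ ^ 2 + 1)) = Real.pi * ((κ ^ 2 - 1) * (3 - κ ^ 2)) := by
    rw [heq]
    field_simp
  have hlhs : (0.995:ℝ) * (κ * (κ ^ 2 + 1)) < Real.tanh y * (κ * (κ ^ 2 + 1)) := by
    apply mul_lt_mul_of_pos_right htanh
    positivity
  have hrhs : Real.pi * ((κ ^ 2 - 1) * (3 - κ ^ 2)) ≤ 3.15 * ((κ ^ 2 - 1) * (3 - κ ^ 2)) := by
    apply mul_le_mul_of_nonneg_right hπ'.le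
    nlinarith
  -- final polynomial contradiction
  nlinarith [sq_nonneg (κ - 1.28), sq_nonneg (κ^2 - 1.64), sq_nonneg (κ - 1), sq_nonneg (κ*κ - κ), mul_pos hκ0 hκ0]
end

section
/- For every ℓ > 0 there is exactly one κ ∈ (√3, ∞) satisfying (κ²−3)²/(4(κ²−1)) = (cosh(κ(π−ℓ)) + 1)/(sinh(κℓ)·sinh(κπ)). -/
open Real Set

private lemma coth_anti {x y : ℝ} (hx : 0 < x) (hxy : x ≤ y) :
    Real.cosh y / Real.sinh y ≤ Real.cosh x / Real.sinh x := by
  have hsx := Real.sinh_pos_iff.2 hx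
  have hsy := Real.sinh_pos_iff.2 (hx.trans_le hxy)
  rw [div_le_div_iff₀ hsy hsx]
  have h0 : Real.sinh 0 ≤ Real.sinh (y - x) := Real.sinh_le_sinh.2 (by linarith)
  rw [Real.sinh_zero, Real.sinh_sub] at h0
  linarith

private lemma H_anti {p q x y : ℝ} (hp : 0 < p) (hq : 0 < q)
    (hx : 0 < x) (hxy : x ≤ y) :
    (Real.cosh (y*p) * Real.cosh (y*q) + 1) / (Real.sinh (y*p) * Real.sinh (y*q)) ≤
    (Real.cosh (x*p) * Real.cosh (x*q) + 1) / (Real.sinh (x*p) * Real.sinh (x*q)) := by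
  have hy := hx.trans_le hxy
  have sxp := Real.sinh_pos_iff.2 (mul_pos hx hp)
  have sxq := Real.sinh_pos_iff.2 (mul_pos hx hq)
  have syp := Real.sinh_pos_iff.2 (mul_pos hy hp)
  have syq := Real.sinh_pos_iff.2 (mul_pos hy hq)
  have e : ∀ z : ℝ, 0 < z →
      (Real.cosh (z*p) * Real.cosh (z*q) + 1) / (Real.sinh (z*p) * Real.sinh (z*q)) =
      (Real.cosh (z*p)/Real.sinh (z*p)) * (Real.cosh (z*q)/Real.sinh (z*q))
        + (1/Real.sinh (z*p)) * (1/Real.sinh (z*q)) := by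
    intro z hz
    have s1 := (Real.sinh_pos_iff.2 (mul_pos hz hp)).ne'
    have s2 := (Real.sinh_pos_iff.2 (mul_pos hz hq)).ne'
    field_simp
  rw [e x hx, e y hy]
  have c1 := coth_anti (mul_pos hx hp) (mul_le_mul_of_nonneg_right hxy hp.le)
  have c2 := coth_anti (mul_pos hx hq) (mul_le_mul_of_nonneg_right hxy hq.le)
  have d1 : 1 / Real.sinh (y*p) ≤ 1 / Real.sinh (x*p) :=
    one_div_le_one_div_of_le sxp (Real.sinh_le_sinh.2 (mul_le_mul_of_nonneg_right hxy hp.le))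
  have d2 : 1 / Real.sinh (y*q) ≤ 1 / Real.sinh (x*q) :=
    one_div_le_one_div_of_le sxq (Real.sinh_le_sinh.2 (mul_le_mul_of_nonneg_right hxy hq.le))
  have t1 : Real.cosh (y*p)/Real.sinh (y*p) * (Real.cosh (y*q)/Real.sinh (y*q)) ≤
      Real.cosh (x*p)/Real.sinh (x*p) * (Real.cosh (x*q)/Real.sinh (x*q)) :=
    mul_le_mul c1 c2 (div_nonneg (Real.cosh_pos _).le syq.le)
      (div_nonneg (Real.cosh_pos _).le sxp.le)
  have t2 : 1/Real.sinh (y*p) * (1/Real.sinh (y*q)) ≤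
      1/Real.sinh (x*p) * (1/Real.sinh (x*q)) :=
    mul_le_mul d1 d2 (by positivity) (by positivity)
  linarith

private lemma g_mono {x y : ℝ} (hx : Real.sqrt 3 ≤ x) (hxy : x < y) :
    (x^2-3)^2/(4*(x^2-1)) < (y^2-3)^2/(4*(y^2-1)) := by
  have h3 : (Real.sqrt 3)^2 = 3 := Real.sq_sqrt (by norm_num)
  have hx0 : 0 < x := lt_of_lt_of_le (Real.sqrt_pos.2 (by norm_num)) hx
  have hux : 3 ≤ x^2 := by nlinarith [Real.sqrt_nonneg 3]
  have huy : x^2 < y^2 := by nlinarith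
  rw [div_lt_div_iff₀ (by nlinarith) (by nlinarith)]
  nlinarith [sq_nonneg (x^2-3), sq_nonneg (y^2-3), mul_pos (sub_pos.2 huy) (sub_pos.2 huy)]

theorem unique_band_edge (ℓ : ℝ) (hℓ : 0 < ℓ) :
    ∃! κ : ℝ, κ ∈ Set.Ioi (Real.sqrt 3) ∧
      (κ ^ 2 - 3) ^ 2 / (4 * (κ ^ 2 - 1)) =
        (Real.cosh (κ * (Real.pi - ℓ)) + 1) /
          (Real.sinh (κ * ℓ) * Real.sinh (κ * Real.pi)) := by
  set a := Real.sqrt 3 with ha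
  have h3 : a ^ 2 = 3 := Real.sq_sqrt (by norm_num)
  have ha0 : 0 < a := Real.sqrt_pos.2 (by norm_num)
  have ha2 : a < 2 := by nlinarith [Real.sqrt_nonneg 3]
  set g : ℝ → ℝ := fun κ => (κ ^ 2 - 3) ^ 2 / (4 * (κ ^ 2 - 1)) with hg
  set R : ℝ → ℝ := fun κ => (Real.cosh (κ * (Real.pi - ℓ)) + 1) /
      (Real.sinh (κ * ℓ) * Real.sinh (κ * Real.pi)) with hR
  set F : ℝ → ℝ := fun κ => g κ - R κ with hF
  -- rewrite R in product form
  have hRe : ∀ κ : ℝ, 0 < κ → R κ =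
      (Real.cosh (κ * Real.pi) * Real.cosh (κ * ℓ) + 1) /
        (Real.sinh (κ * Real.pi) * Real.sinh (κ * ℓ)) - 1 := by
    intro κ hκ
    have e : κ * (Real.pi - ℓ) = κ * Real.pi - κ * ℓ := by ring
    have s1 := (Real.sinh_pos_iff.2 (mul_pos hκ hℓ)).ne'
    have s2 := (Real.sinh_pos_iff.2 (mul_pos hκ Real.pi_pos)).ne'
    rw [hR]; simp only [e, Real.cosh_sub]
    field_simp
    ring
  -- R is antitone on [a, ∞)
  have hRanti : ∀ x y : ℝ, a ≤ x → x ≤ y → R y ≤ R x := by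
    intro x y hx hxy
    have hx0 : 0 < x := ha0.trans_le hx
    rw [hRe x hx0, hRe y (hx0.trans_le hxy)]
    have := H_anti Real.pi_pos hℓ hx0 hxy
    linarith
  -- F strictly monotone on Ici a
  have hFmono : StrictMonoOn F (Set.Ici a) := by
    intro x hx y hy hxy
    have h1 : g x < g y := g_mono (Set.mem_Ici.1 hx) hxy
    have h2 := hRanti x y (Set.mem_Ici.1 hx) hxy.le
    show g x - R x < g y - R y
    linarith
  -- continuity
  have hFcont : ContinuousOn F (Set.Ici a) := by
    apply ContinuousOn.sub
    · apply ContinuousOn.div (by fun_prop) (by fun_prop)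
      intro x hx
      have : 3 ≤ x ^ 2 := by
        have := Set.mem_Ici.1 hx
        nlinarith [Real.sqrt_nonneg 3]
      exact ne_of_gt (by nlinarith)
    · apply ContinuousOn.div (by fun_prop) (by fun_prop)
      intro x hx
      have hx0 : 0 < x := ha0.trans_le (Set.mem_Ici.1 hx)
      exact (mul_pos (Real.sinh_pos_iff.2 (mul_pos hx0 hℓ))
        (Real.sinh_pos_iff.2 (mul_pos hx0 Real.pi_pos))).ne'
  -- F a < 0
  have hFa : F a < 0 := by
    have hRa : 0 < R a := by
      apply div_pos
      · positivity
      · exact mul_pos (Real.sinh_pos_iff.2 (mul_pos ha0 hℓ))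
          (Real.sinh_pos_iff.2 (mul_pos ha0 Real.pi_pos))
    have hga : g a = 0 := by simp [hg, h3]
    simp only [hF, hga]; linarith
  -- choose b with F b > 0
  set C := R 2 with hC
  obtain ⟨b, hb2, hb8⟩ : ∃ b : ℝ, 2 ≤ b ∧ 8 * (|C| + 1) ≤ b :=
    ⟨max 2 (8 * (|C| + 1)), le_max_left _ _, le_max_right _ _⟩
  have hab : a ≤ b := by linarith
  have hFb : 0 < F b := by
    have hRb : R b ≤ C := hRanti 2 b ha2.le (by linarith)
    have hCb : C ≤ |C| := le_abs_self C
    have habs : 0 ≤ |C| := abs_nonneg C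
    have hgb : C < g b := by
      have ht : 1 ≤ |C| + 1 := by linarith
      have hbsq : 64 * (|C| + 1) ^ 2 ≤ b ^ 2 := by nlinarith
      have h34 : b ^ 2 / 4 ≤ b ^ 2 - 3 := by nlinarith
      have hq4 : (0:ℝ) ≤ b ^ 2 / 4 := by positivity
      have hms : (b ^ 2 / 4) * (b ^ 2 / 4) ≤ (b ^ 2 - 3) * (b ^ 2 - 3) :=
        mul_self_le_mul_self hq4 h34
      have key : b ^ 2 * (64 * (|C| + 1) ^ 2) ≤ b ^ 2 * b ^ 2 :=
        mul_le_mul_of_nonneg_left hbsq (sq_nonneg b)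
      have hden : (0:ℝ) ≤ 4 * (b ^ 2 - 1) := by nlinarith
      have hCC : C * (4 * (b ^ 2 - 1)) ≤ |C| * (4 * (b ^ 2 - 1)) :=
        mul_le_mul_of_nonneg_right hCb hden
      rw [hg, lt_div_iff₀ (by nlinarith)]
      nlinarith [sq_nonneg b, habs, hms, key, hCC]
    simp only [hF]; linarith
  -- existence via IVT
  have hsub : Set.Icc a b ⊆ Set.Ici a := Set.Icc_subset_Ici_self
  have hIVT := intermediate_value_Icc hab (hFcont.mono hsub)
  have h0mem : (0:ℝ) ∈ Set.Icc (F a) (F b) := ⟨hFa.le, hFb.le⟩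
  obtain ⟨κ, hκmem, hκ0⟩ := hIVT h0mem
  have hκa : a < κ := by
    rcases lt_or_eq_of_le hκmem.1 with h | h
    · exact h
    · exfalso; rw [← h] at hκ0; linarith
  refine ⟨κ, ⟨Set.mem_Ioi.2 hκa, ?_⟩, ?_⟩
  · have : g κ = R κ := by
      have := hκ0; simp only [hF] at this; linarith
    simpa [hg, hR] using this
  · rintro κ' ⟨hκ'a, hκ'eq⟩
    have hκ'0 : F κ' = 0 := by
      simp only [hF, hg, hR]
      rw [hκ'eq]; ring
    exact hFmono.injOn (Set.mem_Ici.2 (Set.mem_Ioi.1 hκ'a).le)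
      (Set.mem_Ici.2 hκa.le) (by rw [hκ'0, hκ0])
end

section
/- For every 0 < ℓ < π and every κ > 0, the quantity κ(ℓ−π)/(cosh(κ(π−ℓ))−1) + coth(κ(π−ℓ)/2) + coth(κℓ) − κℓ·csch²(κℓ) is strictly positive. -/
lemma aux_pos (x : ℝ) (hx : 0 < x) :
    0 < Real.cosh x / Real.sinh x - x / Real.sinh x ^ 2 := by
  have hs : 0 < Real.sinh x := Real.sinh_pos_iff.mpr hx
  have h2 : 2 * x < Real.sinh (2 * x) := Real.self_lt_sinh_iff.mpr (by linarith)
  rw [Real.sinh_two_mul] at h2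
  rw [div_sub_div _ _ (ne_of_gt hs) (by positivity)]
  apply div_pos
  · nlinarith
  · positivity

theorem partial_deriv_positive (ℓ κ : ℝ) (hℓ : 0 < ℓ) (hℓπ : ℓ < Real.pi) (hκ : 0 < κ) :
    0 < κ * (ℓ - Real.pi) / (Real.cosh (κ * (Real.pi - ℓ)) - 1) +
        Real.cosh (κ * (Real.pi - ℓ) / 2) / Real.sinh (κ * (Real.pi - ℓ) / 2) +
        Real.cosh (κ * ℓ) / Real.sinh (κ * ℓ) -
        κ * ℓ * (1 / Real.sinh (κ * ℓ)) ^ 2 := by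
  set a := κ * (Real.pi - ℓ) with ha
  have hA : 0 < a := mul_pos hκ (by linarith)
  have hB : 0 < κ * ℓ := mul_pos hκ hℓ
  have hs1 : 0 < Real.sinh (a / 2) := Real.sinh_pos_iff.mpr (by linarith)
  have hs2 : 0 < Real.sinh (κ * ℓ) := Real.sinh_pos_iff.mpr hB
  have h1 := aux_pos (a / 2) (by linarith)
  have h2 := aux_pos (κ * ℓ) hB
  have hc : Real.cosh a - 1 = 2 * Real.sinh (a / 2) ^ 2 := by
    have h' : a = 2 * (a / 2) := by ring
    rw [h', Real.cosh_two_mul, Real.cosh_sq]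
    ring
  have key : κ * (ℓ - Real.pi) / (Real.cosh a - 1) +
        Real.cosh (a / 2) / Real.sinh (a / 2) +
        Real.cosh (κ * ℓ) / Real.sinh (κ * ℓ) -
        κ * ℓ * (1 / Real.sinh (κ * ℓ)) ^ 2 =
      (Real.cosh (a / 2) / Real.sinh (a / 2) - (a / 2) / Real.sinh (a / 2) ^ 2) +
      (Real.cosh (κ * ℓ) / Real.sinh (κ * ℓ) - (κ * ℓ) / Real.sinh (κ * ℓ) ^ 2) := by
    have hneg : κ * (ℓ - Real.pi) = -a := by rw [ha]; ring
    rw [hc, hneg]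
    field_simp
    ring
  rw [key]
  linarith
end

section
/- The equation cosh(κπ) = cos θ with κ > 0 and θ ∈ ℝ has no solution, and the equation cos(kπ) = cos θ has, for every θ ∈ ℝ, the solution set {k ≥ 0 : k = |θ/π + 2n| for some n ∈ ℤ}; consequently for each θ the set of energies k² = (θ/π + 2n)², n ∈ ℤ, together covers [0, ∞) as θ ranges over [−π, π). -/
open Real

theorem tight_chain_spectrum :
    (¬ ∃ κ : ℝ, 0 < κ ∧ ∃ θ : ℝ, Real.cosh (κ * Real.pi) = Real.cos θ) ∧
    (∀ θ : ℝ, {k : ℝ | 0 ≤ k ∧ Real.cos (k * Real.pi) = Real.cos θ} =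
      {k : ℝ | 0 ≤ k ∧ ∃ n : ℤ, k = |θ / Real.pi + 2 * n|}) ∧
    (⋃ θ ∈ Set.Ico (-Real.pi) Real.pi,
        {E : ℝ | ∃ n : ℤ, E = (θ / Real.pi + 2 * n) ^ 2}) = Set.Ici 0 := by
  have hpi : (0:ℝ) < π := Real.pi_pos
  have hpi0 : (π:ℝ) ≠ 0 := ne_of_gt hpi
  refine ⟨?_, ?_, ?_⟩
  · rintro ⟨κ, hκ, θ, h⟩
    have h1 : 1 < Real.cosh (κ * π) := by
      rw [Real.one_lt_cosh]
      positivity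
    have h2 : Real.cos θ ≤ 1 := Real.cos_le_one θ
    linarith
  · intro θ
    ext k
    simp only [Set.mem_setOf_eq]
    constructor
    · rintro ⟨hk, hcos⟩
      refine ⟨hk, ?_⟩
      rw [Real.cos_eq_cos_iff] at hcos
      obtain ⟨n, h | h⟩ := hcos
      · refine ⟨-n, ?_⟩
        have : θ / π = 2 * n + k := by field_simp [h]; rw [h]; ring
        rw [this]
        push_cast
        rw [show 2 * (n:ℝ) + k + 2 * (-n : ℝ) = k by ring, abs_of_nonneg hk]
      · refine ⟨-n, ?_⟩
        have : θ / π = 2 * n - k := by field_simp [h]; rw [h]; ring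
        rw [this]
        push_cast
        rw [show 2 * (n:ℝ) - k + 2 * (-n:ℝ) = -k by ring, abs_neg, abs_of_nonneg hk]
    · rintro ⟨hk, n, hn⟩
      refine ⟨hk, ?_⟩
      rw [Real.cos_eq_cos_iff]
      rcases abs_cases (θ / π + 2 * n) with ⟨h1, _⟩ | ⟨h1, _⟩
      · refine ⟨-n, Or.inl ?_⟩
        rw [hn, h1]
        field_simp
        push_cast
        ring
      · refine ⟨-n, Or.inr ?_⟩
        rw [hn, h1]
        push_cast
        field_simp
        ring
  · ext E
    simp only [Set.mem_iUnion, Set.mem_setOf_eq, Set.mem_Ici, Set.mem_Ico]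
    constructor
    · rintro ⟨θ, _, n, rfl⟩
      positivity
    · intro hE
      set x := Real.sqrt E with hx
      set n : ℤ := ⌊(x + 1) / 2⌋ with hn
      have h1 : (2*n : ℝ) ≤ x + 1 := by
        have := Int.floor_le ((x + 1) / 2)
        rw [← hn] at this
        linarith
      have h2 : x + 1 < 2*n + 2 := by
        have := Int.lt_floor_add_one ((x + 1) / 2)
        rw [← hn] at this
        linarith
      refine ⟨(x - 2*n) * π, ⟨by nlinarith, by nlinarith⟩, n, ?_⟩
      have : (x - 2*↑n) * π / π + 2 * ↑n = x := by field_simp; ring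
      rw [this, hx, Real.sq_sqrt hE]
end
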